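/- On a compact convex polytope P ⊂ ℝⁿ, every continuous convex function is the uniform limit of a sequence of convex rational piecewise-linear functions (finite maxima of affine functions with rational coefficients); i.e. the convex rational piecewise-linear functions are dense in the continuous convex functions with respect to the sup norm. -/

import Mathlib

open Filter

/-- An affine-linear function with rational coefficients on `ℝⁿ`. -/
def IsRatAffine (n : ℕ) (g : EuclideanSpace ℝ (Fin n) → ℝ) : Prop :=
  ∃ (c₀ : ℚ) (c : Fin n → ℚ), ∀ x, g x = (c₀ : ℝ) + ∑ i, (c i : ℝ) * x i

/-- A convex rational piecewise-linear function: a finite maximum of affine-linear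
functions with rational coefficients. -/
def IsQPL (n : ℕ) (f : EuclideanSpace ℝ (Fin n) → ℝ) : Prop :=
  ∃ (k : ℕ) (g : Fin (k + 1) → EuclideanSpace ℝ (Fin n) → ℝ),
    (∀ r, IsRatAffine n (g r)) ∧ ∀ x, f x = ⨆ r, g r x

lemma euclid_abs_coord_le {n : ℕ} (x : EuclideanSpace ℝ (Fin n)) (i : Fin n) : |x i| ≤ ‖x‖ := by
  have h := abs_real_inner_le_norm (EuclideanSpace.single i (1:ℝ)) x
  simpa [EuclideanSpace.inner_single_left] using h

lemma exists_rat_affine_near {n : ℕ} (b : ℝ) (c : Fin n → ℝ) {R δ : ℝ} (hR : 0 ≤ R)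
    (hδ : 0 < δ) :
    ∃ (q₀ : ℚ) (q : Fin n → ℚ), ∀ x : EuclideanSpace ℝ (Fin n), ‖x‖ ≤ R →
      |((q₀ : ℝ) + ∑ i, (q i : ℝ) * x i) - (b + ∑ i, c i * x i)| ≤ δ := by
  have hd : 0 < δ / (2 * (n + 1) * (R + 1)) := by positivity
  obtain ⟨q₀, hq₀⟩ := exists_rat_near b hd
  choose q hq using fun i : Fin n => exists_rat_near (c i) hd
  refine ⟨q₀, q, fun x hx => ?_⟩
  set δ' := δ / (2 * (n + 1) * (R + 1)) with hδ'
  have hxi : ∀ i, |x i| ≤ R := fun i => (euclid_abs_coord_le x i).trans hx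
  have h1 : |(q₀:ℝ) - b| ≤ δ' := by rw [abs_sub_comm]; exact hq₀.le
  have h2 : |∑ i, ((q i : ℝ) * x i - c i * x i)| ≤ n * (δ' * R) := by
    refine (Finset.abs_sum_le_sum_abs _ _).trans ?_
    have hterm : ∀ i : Fin n, |(q i : ℝ) * x i - c i * x i| ≤ δ' * R := fun i => by
      rw [← sub_mul, abs_mul]
      exact mul_le_mul (by rw [abs_sub_comm]; exact (hq i).le) (hxi i) (abs_nonneg _) hd.le
    calc ∑ i, |(q i:ℝ) * x i - c i * x i| ≤ ∑ _i : Fin n, δ' * R :=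
          Finset.sum_le_sum fun i _ => hterm i
    _ = n * (δ' * R) := by simp [Finset.sum_const, mul_comm]
  have key : ((q₀:ℝ) + ∑ i, (q i:ℝ) * x i) - (b + ∑ i, c i * x i)
      = ((q₀:ℝ) - b) + ∑ i, ((q i:ℝ) * x i - c i * x i) := by
    rw [Finset.sum_sub_distrib]; ring
  rw [key]
  have habs := abs_add_le ((q₀:ℝ) - b) (∑ i, ((q i:ℝ) * x i - c i * x i))
  have e1 : δ' * (2 * (n + 1) * (R + 1)) = δ := div_mul_cancel₀ _ (by positivity)
  have hn0 : (0:ℝ) ≤ (n:ℝ) := Nat.cast_nonneg n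
  have hfin : δ' + (n:ℝ) * (δ' * R) ≤ δ := by
    nlinarith [mul_nonneg hd.le hR, mul_nonneg (mul_nonneg hn0 hd.le) hR, mul_nonneg hn0 hd.le]
  linarith


lemma clm_repr {n : ℕ} (φ : EuclideanSpace ℝ (Fin n) →L[ℝ] ℝ) (x : EuclideanSpace ℝ (Fin n)) :
    φ x = ∑ i, x i * φ (EuclideanSpace.single i 1) := by
  have hx : ∑ i, x i • EuclideanSpace.single i (1:ℝ) = x := by
    have := (EuclideanSpace.basisFun (Fin n) ℝ).sum_repr x
    simpa [EuclideanSpace.basisFun_apply, EuclideanSpace.basisFun_repr] using this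
  conv_lhs => rw [← hx]
  rw [map_sum]
  simp [smul_eq_mul]

lemma exists_affine_minorant {n : ℕ} (P : Set (EuclideanSpace ℝ (Fin n)))
    (hPc : IsClosed P) (F : EuclideanSpace ℝ (Fin n) → ℝ) (hF : Continuous F)
    (hFconv : ConvexOn ℝ P F) {x₀ : EuclideanSpace ℝ (Fin n)} (hx₀ : x₀ ∈ P) {ε : ℝ} (hε : 0 < ε) :
    ∃ (b : ℝ) (c : Fin n → ℝ),
      (∀ x ∈ P, b + ∑ i, c i * x i ≤ F x) ∧ F x₀ - ε < b + ∑ i, c i * x₀ i := by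
  set S : Set (EuclideanSpace ℝ (Fin n) × ℝ) := {p | p.1 ∈ P ∧ F p.1 ≤ p.2} with hS
  have hSconv : Convex ℝ S := hFconv.convex_epigraph
  have hSclosed : IsClosed S :=
    (hPc.preimage continuous_fst).inter (isClosed_le (hF.comp continuous_fst) continuous_snd)
  have hz : (x₀, F x₀ - ε) ∉ S := fun h => absurd h.2 (by simp; linarith)
  obtain ⟨l, s, hls, hlS⟩ := geometric_hahn_banach_point_closed hSconv hSclosed hz
  set a : ℝ := l (0, 1) with ha_def
  have hdecomp : ∀ (x : EuclideanSpace ℝ (Fin n)) (t : ℝ), l (x, t) = l (x, 0) + t * a := by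
    intro x t
    have hxt : (x, t) = (x, (0:ℝ)) + t • ((0:EuclideanSpace ℝ (Fin n)), (1:ℝ)) := by
      simp [Prod.ext_iff]
    rw [hxt, map_add, map_smul, smul_eq_mul]
  have h0a : 0 ≤ a := by
    by_contra h
    have ha' : a < 0 := lt_of_not_ge h
    set t := max (F x₀) ((s - l (x₀, 0)) / a) with ht
    have h1 : s < l (x₀, t) := hlS _ ⟨hx₀, le_max_left _ _⟩
    rw [hdecomp] at h1
    have h2 : (s - l (x₀, 0)) / a ≤ t := le_max_right _ _
    have h3 : t * a ≤ s - l (x₀, 0) := by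
      have := mul_le_mul_of_nonpos_right h2 (le_of_lt ha')
      rwa [div_mul_cancel₀ _ (ne_of_lt ha')] at this
    linarith
  have ha : 0 < a := by
    rcases h0a.eq_or_lt with h | h
    · exfalso
      have h1 : s < l (x₀, F x₀) := hlS _ ⟨hx₀, le_refl _⟩
      rw [hdecomp] at h1
      rw [hdecomp] at hls
      rw [← h] at h1 hls
      linarith
    · exact h
  have hrepr : ∀ x : EuclideanSpace ℝ (Fin n), l (x, 0) = ∑ i, x i * l (EuclideanSpace.single i 1, 0) := by
    intro x
    have := clm_repr (l.comp (ContinuousLinearMap.inl ℝ (EuclideanSpace ℝ (Fin n)) ℝ)) x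
    simpa using this
  refine ⟨s / a, fun i => -(l (EuclideanSpace.single i 1, 0)) / a, ?_, ?_⟩
  · intro x hx
    have hsum : s / a + ∑ i, -(l (EuclideanSpace.single i 1, 0)) / a * x i = (s - l (x, 0)) / a := by
      rw [hrepr x, eq_div_iff (ne_of_gt ha), add_mul, Finset.sum_mul,
        div_mul_cancel₀ _ (ne_of_gt ha)]
      have h4 : ∀ i : Fin n, (-(l (EuclideanSpace.single i 1, 0)) / a * x i) * a
          = -(x i * l (EuclideanSpace.single i 1, 0)) := fun i => by
        rw [div_mul_eq_mul_div, div_mul_cancel₀ _ (ne_of_gt ha)]; ring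
      rw [Finset.sum_congr rfl fun i _ => h4 i, Finset.sum_neg_distrib]
      ring
    have h1 : s < l (x, F x) := hlS _ ⟨hx, le_refl _⟩
    rw [hdecomp] at h1
    rw [hsum, div_le_iff₀ ha]
    linarith
  · have hsum : s / a + ∑ i, -(l (EuclideanSpace.single i 1, 0)) / a * x₀ i = (s - l (x₀, 0)) / a := by
      rw [hrepr x₀, eq_div_iff (ne_of_gt ha), add_mul, Finset.sum_mul,
        div_mul_cancel₀ _ (ne_of_gt ha)]
      have h4 : ∀ i : Fin n, (-(l (EuclideanSpace.single i 1, 0)) / a * x₀ i) * a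
          = -(x₀ i * l (EuclideanSpace.single i 1, 0)) := fun i => by
        rw [div_mul_eq_mul_div, div_mul_cancel₀ _ (ne_of_gt ha)]; ring
      rw [Finset.sum_congr rfl fun i _ => h4 i, Finset.sum_neg_distrib]
      ring
    rw [hdecomp] at hls
    rw [hsum, lt_div_iff₀ ha]
    linarith


lemma exists_qpl_near (n : ℕ) (P : Set (EuclideanSpace ℝ (Fin n)))
    (hconv : Convex ℝ P) (hcomp : IsCompact P) (hint : (interior P).Nonempty)
    (f : EuclideanSpace ℝ (Fin n) → ℝ)
    (hfc : ContinuousOn f P) (hfconv : ConvexOn ℝ P f) {ε : ℝ} (hε : 0 < ε) :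
    ∃ G, IsQPL n G ∧ ∀ x ∈ P, |G x - f x| ≤ ε := by
  -- Tietze extension
  obtain ⟨Fc, hFc⟩ := ContinuousMap.exists_restrict_eq (Y := ℝ) hcomp.isClosed
    ⟨P.restrict f, hfc.restrict⟩
  have hFeq : ∀ x ∈ P, Fc x = f x := by
    intro x hx
    have := congrFun (congrArg DFunLike.coe hFc) ⟨x, hx⟩
    exact this
  have hFconv : ConvexOn ℝ P Fc := by
    refine ⟨hconv, fun x hx y hy a b ha hb hab => ?_⟩
    rw [hFeq _ hx, hFeq _ hy, hFeq _ (hconv hx hy ha hb hab)]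
    exact hfconv.2 hx hy ha hb hab
  -- bound on P
  obtain ⟨R₀, hR₀⟩ := isBounded_iff_forall_norm_le.1 hcomp.isBounded
  set R := max R₀ 0 with hR
  have hRnn : 0 ≤ R := le_max_right _ _
  have hRb : ∀ x ∈ P, ‖x‖ ≤ R := fun x hx => (hR₀ x hx).trans (le_max_left _ _)
  have hε3 : 0 < ε / 3 := by linarith
  -- rational affine almost-minorants
  have main : ∀ p : P, ∃ (q₀ : ℚ) (q : Fin n → ℚ),
      (∀ x ∈ P, (q₀ : ℝ) + ∑ i, (q i : ℝ) * x i ≤ Fc x + ε / 3) ∧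
      Fc p - 2 * ε / 3 < (q₀ : ℝ) + ∑ i, (q i : ℝ) * (p : EuclideanSpace ℝ (Fin n)) i := by
    rintro ⟨p, hp⟩
    obtain ⟨b, c, hbc1, hbc2⟩ := exists_affine_minorant P hcomp.isClosed Fc Fc.continuous
      hFconv hp hε3
    obtain ⟨q₀, q, hq⟩ := exists_rat_affine_near b c hRnn hε3
    refine ⟨q₀, q, fun x hx => ?_, ?_⟩
    · have h1 := (abs_le.1 (hq x (hRb x hx))).2
      have h2 := hbc1 x hx
      simp only [Subtype.coe_mk]
      linarith
    · have h1 := (abs_le.1 (hq p (hRb p hp))).1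
      simp only [Subtype.coe_mk]
      linarith
  choose q₀ q hq1 hq2 using main
  set Q : P → EuclideanSpace ℝ (Fin n) → ℝ :=
    fun p x => (q₀ p : ℝ) + ∑ i, (q p i : ℝ) * x i with hQ
  have hQcont : ∀ p : P, Continuous (Q p) := fun p =>
    continuous_const.add (continuous_finset_sum _ fun i _ =>
      continuous_const.mul (EuclideanSpace.proj i).continuous)
  -- open cover
  set V : P → Set (EuclideanSpace ℝ (Fin n)) := fun p => {y | Fc y - 2 * ε / 3 < Q p y} with hV
  have hVopen : ∀ p : P, IsOpen (V p) :=
    fun p => isOpen_lt (Fc.continuous.sub continuous_const) (hQcont p)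
  have hVcover : P ⊆ ⋃ p : P, V p := fun x hx =>
    Set.mem_iUnion.2 ⟨⟨x, hx⟩, hq2 ⟨x, hx⟩⟩
  obtain ⟨t, ht⟩ := hcomp.elim_finite_subcover V hVopen hVcover
  have hPne : P.Nonempty := hint.mono interior_subset
  have htne : t.Nonempty := by
    obtain ⟨x, hx⟩ := hPne
    obtain ⟨p, hp, _⟩ := Set.mem_iUnion₂.1 (ht hx)
    exact ⟨p, hp⟩
  set k := t.card - 1 with hk
  have hcard : t.card = k + 1 := (Nat.succ_pred_eq_of_pos (Finset.card_pos.2 htne)).symm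
  set e : Fin (k + 1) → P := fun j => ↑(t.equivFin.symm (Fin.cast hcard.symm j)) with he
  refine ⟨fun x => ⨆ j : Fin (k + 1), Q (e j) x, ⟨k, fun j => Q (e j),
    fun j => ⟨q₀ (e j), q (e j), fun x => rfl⟩, fun x => rfl⟩, fun x hx => ?_⟩
  have hbdd : BddAbove (Set.range fun j : Fin (k + 1) => Q (e j) x) :=
    (Set.finite_range _).bddAbove
  have hupper : (⨆ j : Fin (k + 1), Q (e j) x) ≤ f x + ε / 3 := by
    refine ciSup_le fun j => ?_
    have := hq1 (e j) x hx
    rw [hFeq _ hx] at this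
    exact this
  have hlower : f x - 2 * ε / 3 ≤ ⨆ j : Fin (k + 1), Q (e j) x := by
    obtain ⟨p, hpt, hpV⟩ := Set.mem_iUnion₂.1 (ht hx)
    have hej : e (Fin.cast hcard (t.equivFin ⟨p, hpt⟩)) = p := by
      simp [he, Fin.cast_cast]
    have h1 : Q p x ≤ ⨆ j : Fin (k + 1), Q (e j) x := by
      have := le_ciSup hbdd (Fin.cast hcard (t.equivFin ⟨p, hpt⟩))
      rwa [hej] at this
    have h2 : Fc x - 2 * ε / 3 < Q p x := hpV
    rw [hFeq _ hx] at h2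
    exact h2.le.trans h1
  rw [abs_le]
  constructor <;> [linarith; linarith]


/-- On a compact convex polytope `P ⊂ ℝⁿ` with nonempty interior, every continuous convex
function is the uniform limit of a sequence of convex rational piecewise-linear functions:
the convex rational piecewise-linear functions are dense in the continuous convex
functions for the sup norm on `P`. -/
theorem qpl_dense_in_continuous_convex
    (n : ℕ) (P : Set (EuclideanSpace ℝ (Fin n)))
    (hconv : Convex ℝ P) (hcomp : IsCompact P) (hint : (interior P).Nonempty)
    (f : EuclideanSpace ℝ (Fin n) → ℝ)
    (hfc : ContinuousOn f P) (hfconv : ConvexOn ℝ P f) :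
    ∃ g : ℕ → EuclideanSpace ℝ (Fin n) → ℝ,
      (∀ k, IsQPL n (g k)) ∧
      TendstoUniformlyOn (fun k x => g k x) f atTop P := by
  have key : ∀ k : ℕ, ∃ G, IsQPL n G ∧ ∀ x ∈ P, |G x - f x| ≤ 1 / (k + 1) :=
    fun k => exists_qpl_near n P hconv hcomp hint f hfc hfconv (by positivity)
  choose G hG1 hG2 using key
  refine ⟨G, hG1, ?_⟩
  rw [Metric.tendstoUniformlyOn_iff]
  intro ε hε
  obtain ⟨N, hN⟩ := exists_nat_one_div_lt hε
  filter_upwards [eventually_ge_atTop N] with k hk x hx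
  have h1 : |G k x - f x| ≤ 1 / (k + 1) := hG2 k x hx
  have h2 : (1 : ℝ) / (k + 1) ≤ 1 / (N + 1) := by
    apply one_div_le_one_div_of_le (by positivity)
    have : (N : ℝ) ≤ k := Nat.cast_le.2 hk
    linarith
  rw [Real.dist_eq, abs_sub_comm]
  calc |G k x - f x| ≤ 1 / (k + 1) := h1
  _ ≤ 1 / (N + 1) := h2
  _ < ε := hN
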